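/- If g satisfies g(t) = c·e^{-t} + e^{-t}∑_{k=1}^{n-1} aₖ cos(kωt) + e^{-t}∑_{k=1}^{n-1} bₖ sin(kωt), then g(t)·cos²((ωt - φ)/2) equals a hyper-trigonometric form of order n whose interior coefficients (for 1 < k < n-1) are a'ₖ = aₖ/2 + ((aₖ₋₁ + aₖ₊₁)/4)cos φ + ((bₖ₊₁ - bₖ₋₁)/4)sin φ and b'ₖ = bₖ/2 + ((bₖ₋₁ + bₖ₊₁)/4)cos φ + ((aₖ₋₁ - aₖ₊₁)/4)sin φ, with constant term c' = c/2 + (a₁/4)cos φ + (b₁/4)sin φ. -/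
import Mathlib


open Finset

private lemma cos_half_sq (x : ℝ) : Real.cos (x / 2) ^ 2 = 1 / 2 + Real.cos x / 2 := by
  have := Real.cos_sq (x / 2)
  rw [this]; ring_nf

private lemma prod_trig (p q φ x u : ℝ) :
    (p * Real.cos x + q * Real.sin x) * Real.cos (u - φ)
      = (((p * Real.cos φ - q * Real.sin φ) / 2) * Real.cos (x + u)
          + ((p * Real.sin φ + q * Real.cos φ) / 2) * Real.sin (x + u))
        + (((p * Real.cos φ + q * Real.sin φ) / 2) * Real.cos (x - u)
          + ((q * Real.cos φ - p * Real.sin φ) / 2) * Real.sin (x - u)) := by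
  simp only [Real.cos_add, Real.sin_add, Real.cos_sub, Real.sin_sub]
  ring

private lemma sum_shift_up (F : ℕ → ℝ) (m : ℕ) :
    ∑ k ∈ Icc 1 m, F (k + 1) + F 1 = ∑ k ∈ Icc 1 m, F k + F (m + 1) := by
  induction m with
  | zero => simp
  | succ p ih =>
      rw [Finset.sum_Icc_succ_top (by omega : 1 ≤ p + 1),
        Finset.sum_Icc_succ_top (by omega : 1 ≤ p + 1)]
      linarith [ih]

private lemma sum_shift_down (F : ℕ → ℝ) (m : ℕ) :
    ∑ k ∈ Icc 1 (m + 1), F (k - 1) = F 0 + ∑ k ∈ Icc 1 m, F k := by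
  induction m with
  | zero => simp
  | succ p ih =>
      rw [Finset.sum_Icc_succ_top (by omega : 1 ≤ p + 1 + 1), ih,
        Finset.sum_Icc_succ_top (by omega : 1 ≤ p + 1)]
      simp only [Nat.add_sub_cancel]
      ring

theorem hyper_trig_recursion_step (n : ℕ) (hn : 2 < n) (ω φ c : ℝ) (hω : 0 < ω)
    (a b : ℕ → ℝ) (g : ℝ → ℝ)
    (hg : ∀ t : ℝ, g t = c * Real.exp (-t)
      + Real.exp (-t) * ∑ k ∈ Finset.Icc 1 (n - 1), a k * Real.cos (k * ω * t)
      + Real.exp (-t) * ∑ k ∈ Finset.Icc 1 (n - 1), b k * Real.sin (k * ω * t)) :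
    ∃ (c' : ℝ) (a' b' : ℕ → ℝ),
      (∀ t : ℝ, g t * Real.cos ((ω * t - φ) / 2) ^ 2
          = c' * Real.exp (-t)
            + Real.exp (-t) * ∑ k ∈ Finset.Icc 1 n, a' k * Real.cos (k * ω * t)
            + Real.exp (-t) * ∑ k ∈ Finset.Icc 1 n, b' k * Real.sin (k * ω * t)) ∧
      (∀ k, 1 < k → k < n - 1 →
        a' k = a k / 2 + ((a (k - 1) + a (k + 1)) / 4) * Real.cos φ
                + ((b (k + 1) - b (k - 1)) / 4) * Real.sin φ ∧
        b' k = b k / 2 + ((b (k - 1) + b (k + 1)) / 4) * Real.cos φ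
                + ((a (k - 1) - a (k + 1)) / 4) * Real.sin φ) ∧
      c' = c / 2 + (a 1 / 4) * Real.cos φ + (b 1 / 4) * Real.sin φ := by
  set A : ℕ → ℝ := fun k => if k = 0 then c else if k ≤ n - 1 then a k else 0 with hA
  set B : ℕ → ℝ := fun k => if k = 0 then 0 else if k ≤ n - 1 then b k else 0 with hB
  set a' : ℕ → ℝ := fun k =>
    (if k = 1 then (c / 4) * Real.cos φ else 0) + A k / 2
      + ((A (k - 1) + A (k + 1)) / 4) * Real.cos φ
      + ((B (k + 1) - B (k - 1)) / 4) * Real.sin φ with ha'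
  set b' : ℕ → ℝ := fun k =>
    (if k = 1 then (c / 4) * Real.sin φ else 0) + B k / 2
      + ((B (k - 1) + B (k + 1)) / 4) * Real.cos φ
      + ((A (k - 1) - A (k + 1)) / 4) * Real.sin φ with hb'
  have hAB0 : ∀ j, n - 1 < j → A j = 0 ∧ B j = 0 := by
    intro j hj
    have hj0 : ¬ j = 0 := by omega
    have hj1 : ¬ j ≤ n - 1 := by omega
    simp [hA, hB, hj0, hj1]
  refine ⟨c / 2 + (a 1 / 4) * Real.cos φ + (b 1 / 4) * Real.sin φ, a', b', ?_, ?_, rfl⟩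
  · intro t
    rw [hg t, show ((ω * t - φ) / 2) = (ω * t - φ) / 2 from rfl, cos_half_sq]
    set f : ℕ → ℝ := fun k => A k * Real.cos (k * ω * t) + B k * Real.sin (k * ω * t) with hf
    set gp : ℕ → ℝ := fun j =>
      ((A (j - 1) * Real.cos φ - B (j - 1) * Real.sin φ) / 2) * Real.cos (j * ω * t)
        + ((A (j - 1) * Real.sin φ + B (j - 1) * Real.cos φ) / 2) * Real.sin (j * ω * t) with hgp
    set gm : ℕ → ℝ := fun j =>
      ((A (j + 1) * Real.cos φ + B (j + 1) * Real.sin φ) / 2) * Real.cos (j * ω * t)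
        + ((B (j + 1) * Real.cos φ - A (j + 1) * Real.sin φ) / 2) * Real.sin (j * ω * t) with hgm
    -- replace a, b by A, B in the sums
    have hfa : ∑ k ∈ Icc 1 (n - 1), a k * Real.cos (k * ω * t)
        = ∑ k ∈ Icc 1 (n + 1), A k * Real.cos (k * ω * t) := by
      rw [Finset.sum_congr rfl (fun k hk => ?_)]
      · exact Finset.sum_subset (Finset.Icc_subset_Icc_right (by omega)) (by
          intro x hx hnx
          simp only [mem_Icc] at hx hnx
          have : A x = 0 := (hAB0 x (by omega)).1
          rw [this, zero_mul])
      · simp only [mem_Icc] at hk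
        have h0 : ¬ k = 0 := by omega
        simp [hA, h0, hk.2]
    have hfb : ∑ k ∈ Icc 1 (n - 1), b k * Real.sin (k * ω * t)
        = ∑ k ∈ Icc 1 (n + 1), B k * Real.sin (k * ω * t) := by
      rw [Finset.sum_congr rfl (fun k hk => ?_)]
      · exact Finset.sum_subset (Finset.Icc_subset_Icc_right (by omega)) (by
          intro x hx hnx
          simp only [mem_Icc] at hx hnx
          have : B x = 0 := (hAB0 x (by omega)).2
          rw [this, zero_mul])
      · simp only [mem_Icc] at hk
        have h0 : ¬ k = 0 := by omega
        simp [hB, h0, hk.2]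
    rw [hfa, hfb]
    -- the combined sum
    have h1 : ∑ k ∈ Icc 1 (n + 1), f k
        = ∑ k ∈ Icc 1 (n + 1), A k * Real.cos (k * ω * t)
          + ∑ k ∈ Icc 1 (n + 1), B k * Real.sin (k * ω * t) := by
      simp only [hf]; exact Finset.sum_add_distrib
    -- product expansion term by term
    have h2 : (∑ k ∈ Icc 1 (n + 1), f k) * Real.cos (ω * t - φ)
        = ∑ k ∈ Icc 1 (n + 1), gp (k + 1) + ∑ k ∈ Icc 1 (n + 1), gm (k - 1) := by
      rw [Finset.sum_mul, ← Finset.sum_add_distrib]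
      refine Finset.sum_congr rfl (fun k hk => ?_)
      simp only [mem_Icc] at hk
      have hk1 : 1 ≤ k := hk.1
      have e0 : k + 1 - 1 = k := by omega
      have e0' : k - 1 + 1 = k := by omega
      have ec : ((k - 1 : ℕ) : ℝ) = (k : ℝ) - 1 := by
        rw [Nat.cast_sub hk1]; norm_num
      simp only [hf, hgp, hgm, e0, e0', ec]
      have e1 : ((k : ℕ) + 1 : ℕ) * ω * t = (k : ℝ) * ω * t + ω * t := by push_cast; ring
      have e2 : ((k : ℝ) - 1) * ω * t = (k : ℝ) * ω * t - ω * t := by ring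
      rw [e1, e2]
      exact prod_trig _ _ _ _ _
    -- shift the sums
    have h3 : ∑ k ∈ Icc 1 (n + 1), gp (k + 1) + gp 1
        = ∑ k ∈ Icc 1 (n + 1), gp k + gp (n + 2) := sum_shift_up gp (n + 1)
    have h4 : ∑ k ∈ Icc 1 (n + 1), gm (k - 1) = gm 0 + ∑ k ∈ Icc 1 n, gm k :=
      sum_shift_down gm n
    have h5 : ∑ k ∈ Icc 1 (n + 1), gm k = ∑ k ∈ Icc 1 n, gm k + gm (n + 1) :=
      Finset.sum_Icc_succ_top (by omega) gm
    -- boundary values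
    have hgpn : gp (n + 2) = 0 := by
      have h := hAB0 (n + 1) (by omega)
      have e : n + 2 - 1 = n + 1 := by omega
      simp only [hgp, e, h.1, h.2]
      ring
    have hgmn : gm (n + 1) = 0 := by
      have h := hAB0 (n + 2) (by omega)
      simp only [hgm, h.1, h.2]
      ring
    have hgp1 : c * Real.cos (ω * t - φ) = 2 * gp 1 := by
      have hA0 : A 0 = c := by simp [hA]
      have hB0 : B 0 = 0 := by simp [hB]
      simp only [hgp, Nat.sub_self, hA0, hB0, Nat.cast_one, one_mul, Real.cos_sub]
      ring
    have hgm0 : gm 0 = (a 1 * Real.cos φ + b 1 * Real.sin φ) / 2 := by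
      have hA1 : A 1 = a 1 := by
        have : (1 : ℕ) ≤ n - 1 := by omega
        simp [hA, this]
      have hB1 : B 1 = b 1 := by
        have : (1 : ℕ) ≤ n - 1 := by omega
        simp [hB, this]
      simp only [hgm, zero_add, hA1, hB1, Nat.cast_zero, zero_mul, Real.cos_zero,
        Real.sin_zero, mul_one, mul_zero]
      ring
    -- the new coefficients: pointwise decomposition
    have h6 : ∑ k ∈ Icc 1 (n + 1), (a' k * Real.cos (k * ω * t) + b' k * Real.sin (k * ω * t))
        = ∑ k ∈ Icc 1 (n + 1), (f k / 2 + gp k / 2 + gm k / 2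
            + (if k = 1 then gp 1 / 2 else 0)) := by
      refine Finset.sum_congr rfl (fun k hk => ?_)
      by_cases hk1 : k = 1
      · subst hk1
        have hA0 : A 0 = c := by simp [hA]
        have hB0 : B 0 = 0 := by simp [hB]
        simp only [ha', hb', hf, hgp, hgm, Nat.sub_self, hA0, hB0, reduceIte]
        ring
      · simp only [ha', hb', hf, hgp, hgm, if_neg hk1]
        ring
    have h7 : ∑ k ∈ Icc 1 (n + 1), (f k / 2 + gp k / 2 + gm k / 2
            + (if k = 1 then gp 1 / 2 else 0))
        = (∑ k ∈ Icc 1 (n + 1), f k) / 2 + (∑ k ∈ Icc 1 (n + 1), gp k) / 2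
          + (∑ k ∈ Icc 1 (n + 1), gm k) / 2 + gp 1 / 2 := by
      rw [Finset.sum_add_distrib, Finset.sum_add_distrib, Finset.sum_add_distrib,
        Finset.sum_ite_eq' (Icc 1 (n + 1)) 1 (fun _ => gp 1 / 2),
        if_pos (by simp only [mem_Icc]; omega), ← Finset.sum_div, ← Finset.sum_div,
        ← Finset.sum_div]
    -- top coefficient vanishes
    have h8 : a' (n + 1) = 0 ∧ b' (n + 1) = 0 := by
      have hx : A (n + 1 - 1) = 0 := (hAB0 n (by omega)).1
      have hy : B (n + 1 - 1) = 0 := (hAB0 n (by omega)).2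
      have hx1 : A (n + 1) = 0 := (hAB0 (n + 1) (by omega)).1
      have hy1 : B (n + 1) = 0 := (hAB0 (n + 1) (by omega)).2
      have hx2 : A (n + 1 + 1) = 0 := (hAB0 (n + 2) (by omega)).1
      have hy2 : B (n + 1 + 1) = 0 := (hAB0 (n + 2) (by omega)).2
      have hne : ¬ (n + 1 = 1) := by omega
      constructor <;> simp only [ha', hb', hx, hy, hx1, hy1, hx2, hy2, if_neg hne] <;> ring
    have h9 : ∑ k ∈ Icc 1 (n + 1), (a' k * Real.cos (k * ω * t) + b' k * Real.sin (k * ω * t))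
        = ∑ k ∈ Icc 1 n, a' k * Real.cos (k * ω * t)
          + ∑ k ∈ Icc 1 n, b' k * Real.sin (k * ω * t) := by
      rw [Finset.sum_Icc_succ_top (by omega : 1 ≤ n + 1), h8.1, h8.2,
        Finset.sum_add_distrib]
      ring
    -- put everything together
    have key : (c + (∑ k ∈ Icc 1 (n + 1), A k * Real.cos (k * ω * t)
          + ∑ k ∈ Icc 1 (n + 1), B k * Real.sin (k * ω * t)))
          * (1 / 2 + Real.cos (ω * t - φ) / 2)
        = (c / 2 + (a 1 / 4) * Real.cos φ + (b 1 / 4) * Real.sin φ)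
          + (∑ k ∈ Icc 1 n, a' k * Real.cos (k * ω * t)
            + ∑ k ∈ Icc 1 n, b' k * Real.sin (k * ω * t)) := by
      rw [← h1, ← h9, h6, h7]
      linear_combination (1 / 2 : ℝ) * h2 + (1 / 2 : ℝ) * h3 + (1 / 2 : ℝ) * h4
        - (1 / 2 : ℝ) * h5 + (1 / 2 : ℝ) * hgpn - (1 / 2 : ℝ) * hgmn
        + (1 / 2 : ℝ) * hgp1 + (1 / 2 : ℝ) * hgm0
    linear_combination Real.exp (-t) * key
  · intro k hk1 hk2
    have h0 : ¬ (k = 0) := by omega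
    have h1 : ¬ (k = 1) := by omega
    have h2 : k ≤ n - 1 := by omega
    have h3 : ¬ (k - 1 = 0) := by omega
    have h4 : k - 1 ≤ n - 1 := by omega
    have h5 : ¬ (k + 1 = 0) := by omega
    have h6 : k + 1 ≤ n - 1 := by omega
    constructor <;> simp only [ha', hb', hA, hB, if_neg h0, if_neg h1, if_pos h2,
      if_neg h3, if_pos h4, if_neg h5, if_pos h6] <;> ring
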